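/- arXiv:1209.0956 — 4 statements merged into one kernel-verified Lean document; each statement's English description precedes it below -/
import Mathlib

section
/- Let C ⊆ L⁰ be nonempty and satisfy the countable concatenation property (in particular ξ·1_A + η·1_{A^c} ∈ C for all ξ, η ∈ C and A ∈ 𝒢). If x ∈ L⁰ and x ∉ C, then there exists H ∈ 𝒢 with P(H) > 0 such that: (i) there exists ξ ∈ C with x = ξ a.e. on Ω∖H; (ii) for every A ∈ 𝒢 with A ⊆ H and P(A) > 0 there is no ξ ∈ C with x = ξ a.e. on A. Moreover H is, up to null sets, the largest set D ∈ 𝒢 satisfying property (ii). -/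
open MeasureTheory
open scoped ENNReal

variable {Ω : Type*} [MeasurableSpace Ω]

/-- The countable concatenation property (CSet): for every countable measurable partition
`{A n}` of `Ω` and every sequence `{x n} ⊆ C`, the concatenation `∑ n, 1_{A n} • x n`
(i.e. the element `z ∈ L⁰` agreeing a.e. with `x n` on each `A n`) belongs to `C`. -/
def CSet (μ : Measure Ω) (C : Set (Ω →ₘ[μ] ℝ)) : Prop :=
  ∀ A : ℕ → Set Ω, (∀ n, MeasurableSet (A n)) → Pairwise (Function.onFun Disjoint A) →
    (⋃ n, A n) = Set.univ →
    ∀ x : ℕ → Ω →ₘ[μ] ℝ, (∀ n, x n ∈ C) →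
      ∀ z : Ω →ₘ[μ] ℝ, (∀ n, ∀ᵐ ω ∂μ, ω ∈ A n → z ω = x n ω) → z ∈ C

/-- The countable concatenation hull `C^cc` of `C`. -/
def ccHull (μ : Measure Ω) (C : Set (Ω →ₘ[μ] ℝ)) : Set (Ω →ₘ[μ] ℝ) :=
  {z | ∃ (A : ℕ → Set Ω) (x : ℕ → Ω →ₘ[μ] ℝ),
    (∀ n, MeasurableSet (A n)) ∧ Pairwise (Function.onFun Disjoint A) ∧
    (⋃ n, A n) = Set.univ ∧ (∀ n, x n ∈ C) ∧
    ∀ n, ∀ᵐ ω ∂μ, ω ∈ A n → z ω = x n ω}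

/-- `C 1_A = L⁰ 1_A`: every `x ∈ L⁰` agrees a.e. on `A` with some element of `C`. -/
def FullOn (μ : Measure Ω) (C : Set (Ω →ₘ[μ] ℝ)) (A : Set Ω) : Prop :=
  ∀ x : Ω →ₘ[μ] ℝ, ∃ ξ ∈ C, ∀ᵐ ω ∂μ, ω ∈ A → x ω = ξ ω

/-- `A` is (a version of) the maximal set `A_C` of the class
`{A ∈ 𝒢 ∣ C 1_A = L⁰ 1_A}`; its complement `Aᶜ` is then `D_C`. -/
def IsMaxFull (μ : Measure Ω) (C : Set (Ω →ₘ[μ] ℝ)) (A : Set Ω) : Prop :=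
  MeasurableSet A ∧ FullOn μ C A ∧
    ∀ B : Set Ω, MeasurableSet B → FullOn μ C B → μ (B \ A) = 0

/-- `x` is locally separated from `C` on `H`: for every `B ⊆ H` with `μ B > 0`
there is no `ξ ∈ C` with `x = ξ` a.e. on `B`.  With `H = D_C` this is the paper's
notion of `x` being outside `C`. -/
def LocOutside (μ : Measure Ω) (C : Set (Ω →ₘ[μ] ℝ)) (x : Ω →ₘ[μ] ℝ) (H : Set Ω) : Prop :=
  ∀ B : Set Ω, MeasurableSet B → B ⊆ H → 0 < μ B →
    ¬ ∃ ξ ∈ C, ∀ᵐ ω ∂μ, ω ∈ B → x ω = ξ ω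

/-- `H` is (a version of) the largest measurable set `H_{C,x}` on which `x` is locally
separated from `C`. -/
def IsMaxLocOutside (μ : Measure Ω) (C : Set (Ω →ₘ[μ] ℝ)) (x : Ω →ₘ[μ] ℝ) (H : Set Ω) : Prop :=
  MeasurableSet H ∧ LocOutside μ C x H ∧
    ∀ B : Set Ω, MeasurableSet B → LocOutside μ C x B → μ (B \ H) = 0

/-- `C ⊆ L⁰` is conditionally evenly convex: there are a family `L ⊆ L⁰` and
`Y_{x'} ∈ L⁰` for each `x' ∈ L` with
`C = ⋂_{x' ∈ L} {x ∣ x·x' < Y_{x'} a.e. on D_C}` (where `D_C = Aᶜ` for the maximal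
full set `A = A_C`; the case `L = ∅` gives `C = L⁰`). -/
def CondEvenlyConvex (μ : Measure Ω) (C : Set (Ω →ₘ[μ] ℝ)) : Prop :=
  ∃ A : Set Ω, IsMaxFull μ C A ∧
    ∃ (L : Set (Ω →ₘ[μ] ℝ)) (Y : (Ω →ₘ[μ] ℝ) → Ω →ₘ[μ] ℝ),
      C = ⋂ x' ∈ L, {x : Ω →ₘ[μ] ℝ | ∀ᵐ ω ∂μ, ω ∈ Aᶜ → x ω * x' ω < Y x' ω}

/-- The polar `C°` of `C` (relative to `D = D_C`). -/
def polarSet (μ : Measure Ω) (C : Set (Ω →ₘ[μ] ℝ)) (D : Set Ω) : Set (Ω →ₘ[μ] ℝ) :=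
  {x' | ∀ x ∈ C, ∀ᵐ ω ∂μ, ω ∈ D → x ω * x' ω < 1}

/-- The bipolar `C°°` of `C` (relative to `D = D_C`). -/
def bipolarSet (μ : Measure Ω) (C : Set (Ω →ₘ[μ] ℝ)) (D : Set Ω) : Set (Ω →ₘ[μ] ℝ) :=
  {x | ∀ x' ∈ polarSet μ C D, ∀ᵐ ω ∂μ, ω ∈ D → x ω * x' ω < 1}

lemma glue_mem (μ : Measure Ω) (C : Set (Ω →ₘ[μ] ℝ)) (hcc : CSet μ C)
    (B : ℕ → Set Ω) (hB : ∀ n, MeasurableSet (B n))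
    (ξ : ℕ → Ω →ₘ[μ] ℝ) (hξ : ∀ n, ξ n ∈ C)
    (x : Ω →ₘ[μ] ℝ) (hxξ : ∀ n, ∀ᵐ ω ∂μ, ω ∈ B n → x ω = ξ n ω)
    (ξ₀ : Ω →ₘ[μ] ℝ) (hξ₀ : ξ₀ ∈ C) :
    ∃ z ∈ C, ∀ᵐ ω ∂μ, ω ∈ (⋃ n, B n) → x ω = z ω := by
  classical
  -- the partition
  set A : ℕ → Set Ω := fun n => Nat.rec (⋃ m, B m)ᶜ (fun k _ => disjointed B k) n with hA
  have hA0 : A 0 = (⋃ m, B m)ᶜ := rfl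
  have hAs : ∀ k, A (k + 1) = disjointed B k := fun k => rfl
  have hAmeas : ∀ n, MeasurableSet (A n) := by
    intro n
    cases n with
    | zero => exact (MeasurableSet.iUnion hB).compl
    | succ k => exact MeasurableSet.disjointed hB k
  have hsub : ∀ k, A (k + 1) ⊆ ⋃ m, B m := by
    intro k
    rw [hAs]
    exact (disjointed_subset B k).trans (Set.subset_iUnion B k)
  have hdisj : Pairwise (Function.onFun Disjoint A) := by
    intro i j hij
    match i, j with
    | 0, 0 => exact absurd rfl hij
    | 0, (k+1) => exact Set.disjoint_compl_left_iff_subset.2 (hsub k)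
    | (k+1), 0 => exact (Set.disjoint_compl_left_iff_subset.2 (hsub k)).symm
    | (i+1), (j+1) =>
      exact (disjoint_disjointed B) (fun h => hij (by rw [h]))
  have hcov : (⋃ n, A n) = Set.univ := by
    apply Set.eq_univ_of_forall
    intro ω
    by_cases h : ω ∈ ⋃ m, B m
    · rw [← iUnion_disjointed] at h
      obtain ⟨k, hk⟩ := Set.mem_iUnion.1 h
      exact Set.mem_iUnion.2 ⟨k + 1, hk⟩
    · exact Set.mem_iUnion.2 ⟨0, h⟩
  have hcov' : ∀ ω, ∃ n, ω ∈ A n := fun ω => Set.mem_iUnion.1 (hcov ▸ Set.mem_univ ω)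
  set xs : ℕ → (Ω →ₘ[μ] ℝ) := fun n => Nat.rec ξ₀ (fun k _ => ξ k) n with hxs
  have hxsC : ∀ n, xs n ∈ C := by
    intro n; cases n with
    | zero => exact hξ₀
    | succ k => exact hξ k
  set g : Ω → ℝ := fun ω => xs (Nat.find (hcov' ω)) ω with hg
  have hgA : ∀ n, ∀ ω ∈ A n, g ω = xs n ω := by
    intro n ω hω
    have hfind : Nat.find (hcov' ω) = n := by
      have := Nat.find_spec (hcov' ω)
      by_contra hne
      exact (Set.disjoint_left.1 (hdisj hne)) this hω
    rw [hg]; simp only; rw [hfind]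
  have hgm : AEMeasurable g μ := by
    have : AEMeasurable g (μ.restrict (⋃ n, A n)) := by
      rw [aemeasurable_iUnion_iff]
      intro n
      have h1 : AEMeasurable (xs n) (μ.restrict (A n)) :=
        ((xs n).aemeasurable).restrict
      refine h1.congr ?_
      rw [Filter.EventuallyEq, ae_restrict_iff' (hAmeas n)]
      exact Filter.Eventually.of_forall fun ω hω => (hgA n ω hω).symm
    rwa [hcov, Measure.restrict_univ] at this
  set z : Ω →ₘ[μ] ℝ := AEEqFun.mk g hgm.aestronglyMeasurable with hz
  have hzg : ∀ᵐ ω ∂μ, z ω = g ω := AEEqFun.coeFn_mk g hgm.aestronglyMeasurable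
  have hzA : ∀ n, ∀ᵐ ω ∂μ, ω ∈ A n → z ω = xs n ω := by
    intro n
    filter_upwards [hzg] with ω hω hωA
    rw [hω, hgA n ω hωA]
  have hzC : z ∈ C := hcc A hAmeas hdisj hcov xs hxsC z hzA
  refine ⟨z, hzC, ?_⟩
  have hall : ∀ᵐ ω ∂μ, ∀ n, (ω ∈ A (n+1) → z ω = ξ n ω) ∧ (ω ∈ B n → x ω = ξ n ω) := by
    rw [MeasureTheory.ae_all_iff]
    intro n
    filter_upwards [hzA (n+1), hxξ n] with ω h1 h2
    exact ⟨h1, h2⟩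
  filter_upwards [hall] with ω hω hmem
  rw [← iUnion_disjointed] at hmem
  obtain ⟨k, hk⟩ := Set.mem_iUnion.1 hmem
  have hkB : ω ∈ B k := disjointed_subset B k hk
  rw [(hω k).2 hkB, ← (hω k).1 hk]

/-- **Hereditarily disjoint stratification (Guo's lemma, `L⁰` instance).**
Let `C ⊆ L⁰` be nonempty with the countable concatenation property, and let
`x ∉ C`.  Then there exists `H ∈ 𝒢` with `μ H > 0` such that (i) `x` agrees a.e.
on `Ω ∖ H` with some `ξ ∈ C`; (ii) `x` is locally separated from `C` on `H`;
and `H` is, up to null sets, the largest set with property (ii). -/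
theorem stmt14 (μ : Measure Ω) [IsProbabilityMeasure μ]
    (C : Set (Ω →ₘ[μ] ℝ)) (hne : C.Nonempty) (hcc : CSet μ C)
    (x : Ω →ₘ[μ] ℝ) (hx : x ∉ C) :
    ∃ H : Set Ω, MeasurableSet H ∧ 0 < μ H ∧
      (∃ ξ ∈ C, ∀ᵐ ω ∂μ, ω ∉ H → x ω = ξ ω) ∧
      LocOutside μ C x H ∧
      ∀ D : Set Ω, MeasurableSet D → LocOutside μ C x D → μ (D \ H) = 0 := by
  classical
  obtain ⟨ξ₀, hξ₀⟩ := hne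
  -- "good" sets: measurable sets on which x agrees a.e. with some element of C
  set Good : Set Ω → Prop :=
    fun B => MeasurableSet B ∧ ∃ ξ ∈ C, ∀ᵐ ω ∂μ, ω ∈ B → x ω = ξ ω with hGood
  have hGoodEmpty : Good ∅ := ⟨MeasurableSet.empty, ξ₀, hξ₀, by simp⟩
  -- countable union of good sets is good
  have hGoodUnion : ∀ B : ℕ → Set Ω, (∀ n, Good (B n)) → Good (⋃ n, B n) := by
    intro B hB
    refine ⟨MeasurableSet.iUnion fun n => (hB n).1, ?_⟩
    choose ξ hξC hξ using fun n => (hB n).2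
    obtain ⟨z, hzC, hz⟩ := glue_mem μ C hcc B (fun n => (hB n).1) ξ hξC x hξ ξ₀ hξ₀
    exact ⟨z, hzC, hz⟩
  set S : Set ℝ≥0∞ := μ '' {B | Good B} with hS
  have hSne : S.Nonempty := ⟨μ ∅, ∅, hGoodEmpty, rfl⟩
  obtain ⟨u, hu_mono, hu_tendsto, hu_mem⟩ :=
    exists_seq_tendsto_sSup hSne (OrderTop.bddAbove S)
  choose B hBgood hBμ using hu_mem
  set G : Set Ω := ⋃ n, B n with hG
  have hGgood : Good G := hGoodUnion B hBgood
  obtain ⟨hGmeas, ξG, hξGC, hξG⟩ := hGgood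
  have hGinS : μ G ∈ S := ⟨G, ⟨hGmeas, ξG, hξGC, hξG⟩, rfl⟩
  have hGle : μ G ≤ sSup S := le_sSup hGinS
  have hGge : sSup S ≤ μ G := by
    refine le_of_tendsto hu_tendsto (Filter.Eventually.of_forall fun n => ?_)
    rw [← hBμ n]
    exact measure_mono (Set.subset_iUnion B n)
  have hGsup : μ G = sSup S := le_antisymm hGle hGge
  have hGfin : μ G ≠ ⊤ := measure_ne_top μ G
  -- maximality of G among good sets
  have hGmax : ∀ B' : Set Ω, Good B' → μ (B' \ G) = 0 := by
    intro B' hB'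
    have hU : Good (B' ∪ G) := by
      have := hGoodUnion (fun n => Nat.rec B' (fun k _ => B k) n)
        (fun n => by cases n with
          | zero => exact hB'
          | succ k => exact hBgood k)
      have heq : (⋃ n, (Nat.rec B' (fun k _ => B k) n : Set Ω)) = B' ∪ G := by
        apply Set.Subset.antisymm
        · refine Set.iUnion_subset fun n => ?_
          cases n with
          | zero => exact Set.subset_union_left
          | succ k => exact (Set.subset_iUnion B k).trans Set.subset_union_right
        · refine Set.union_subset ?_ ?_
          · exact Set.subset_iUnion (fun n => (Nat.rec B' (fun k _ => B k) n : Set Ω)) 0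
          · exact Set.iUnion_subset fun k =>
              Set.subset_iUnion (fun n => (Nat.rec B' (fun k _ => B k) n : Set Ω)) (k+1)
      rwa [heq] at this
    have hUle : μ (B' ∪ G) ≤ μ G := hGsup ▸ le_sSup ⟨B' ∪ G, hU, rfl⟩
    have hsplit : μ (B' \ G) + μ G = μ (B' ∪ G) := by
      rw [← measure_union (Set.disjoint_left.2 fun a ha h => ha.2 h) hGmeas,
        Set.diff_union_self]
    have : μ (B' \ G) + μ G ≤ 0 + μ G := by
      rw [hsplit, zero_add]; exact hUle
    have := ENNReal.le_of_add_le_add_right hGfin this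
    exact le_antisymm this zero_le
  refine ⟨Gᶜ, hGmeas.compl, ?_, ⟨ξG, hξGC, by simpa using hξG⟩, ?_, ?_⟩
  · -- μ Gᶜ > 0
    rw [pos_iff_ne_zero]
    intro h0
    apply hx
    have hxξG : x =ᵐ[μ] ξG := by
      have hGae : ∀ᵐ ω ∂μ, ω ∈ G := by
        have hh := measure_eq_zero_iff_ae_notMem.mp h0
        filter_upwards [hh] with ω hω using not_not.mp hω
      filter_upwards [hξG, hGae] with ω h1 h2 using h1 h2
    have : x = ξG := by
      ext1; exact hxξG.trans (Filter.EventuallyEq.refl _ _)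
    rwa [this]
  · -- LocOutside
    intro B' hB'meas hB'sub hB'pos ⟨ξ, hξC, hξ⟩
    have hB'good : Good B' := ⟨hB'meas, ξ, hξC, hξ⟩
    have := hGmax B' hB'good
    rw [Set.diff_eq, Set.inter_eq_self_of_subset_left] at this
    · exact absurd this (pos_iff_ne_zero.1 hB'pos)
    · exact hB'sub
  · -- maximality
    intro D hDmeas hDloc
    by_contra h0
    refine hDloc (D \ Gᶜ) (hDmeas.diff hGmeas.compl) Set.diff_subset
      (pos_iff_ne_zero.2 h0) ⟨ξG, hξGC, ?_⟩
    filter_upwards [hξG] with ω h1 h2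
    exact h1 (not_not.mp h2.2)
end

section
/- Let C ⊆ L⁰ be nonempty and satisfy the countable concatenation property, and for x ∉ C let H_{C,x} be the largest set H ∈ 𝒢 such that for every A ⊆ H with P(A) > 0 no ξ ∈ C satisfies x = ξ a.e. on A. Then: (1) if x ∉ C, then H_{C,x} ⊆ D_C up to null sets, and hence P(D_C) ≥ P(H_{C,x}) > 0; (2) if x ∉ C and x is outside C, then H_{C,x} = D_C up to null sets; (3) if there exists x ∈ L⁰ with x ∉ C, then the set χ := {y ∈ L⁰ : y is outside C} is nonempty. -/
open MeasureTheory

variable {Ω : Type*} [MeasurableSpace Ω]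

private lemma paste_ae (μ : Measure Ω) (D : ℕ → Set Ω) (hD : ∀ n, MeasurableSet (D n))
    (hdisj : Pairwise (Function.onFun Disjoint D)) (hcov : (⋃ n, D n) = Set.univ)
    (x : ℕ → Ω →ₘ[μ] ℝ) :
    ∃ z : Ω →ₘ[μ] ℝ, ∀ n, ∀ᵐ ω ∂μ, ω ∈ D n → z ω = x n ω := by
  classical
  have hex : ∀ ω, ∃ n, ω ∈ D n := by
    intro ω
    have : ω ∈ ⋃ n, D n := hcov ▸ Set.mem_univ ω
    exact Set.mem_iUnion.mp this
  set g : ℕ → Ω → ℝ := fun n => (x n).aestronglyMeasurable.mk _ with hg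
  have hgm : ∀ n, Measurable (g n) := fun n =>
    (x n).aestronglyMeasurable.stronglyMeasurable_mk.measurable
  set ι : Ω → ℕ := fun ω => Nat.find (hex ω) with hι
  have hιm : Measurable ι := by
    apply measurable_to_countable'
    intro n
    have heq : ι ⁻¹' {n} = D n ∩ ⋂ m, ⋂ _ : m < n, (D m)ᶜ := by
      ext ω
      simp only [Set.mem_preimage, Set.mem_singleton_iff, hι, Nat.find_eq_iff,
        Set.mem_inter_iff, Set.mem_iInter, Set.mem_compl_iff]
    rw [heq]
    exact (hD n).inter (MeasurableSet.iInter fun m =>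
      MeasurableSet.iInter fun _ => (hD m).compl)
  have hFm : Measurable (fun p : Ω × ℕ => g p.2 p.1) :=
    measurable_from_prod_countable_left (fun n => hgm n)
  have hfm : Measurable (fun ω => g (ι ω) ω) := hFm.comp (measurable_id.prodMk hιm)
  refine ⟨AEEqFun.mk _ hfm.aestronglyMeasurable, fun n => ?_⟩
  filter_upwards [AEEqFun.coeFn_mk _ hfm.aestronglyMeasurable,
    (x n).aestronglyMeasurable.ae_eq_mk] with ω h1 h2 hω
  have hιω : ι ω = n := by
    by_contra hne'
    exact Set.disjoint_left.mp (hdisj hne') (Nat.find_spec (hex ω)) hω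
  calc (AEEqFun.mk _ hfm.aestronglyMeasurable : Ω →ₘ[μ] ℝ) ω = g (ι ω) ω := h1
    _ = g n ω := by rw [hιω]
    _ = (x n) ω := h2.symm

private lemma exists_max_set (μ : Measure Ω) [IsFiniteMeasure μ] (P : Set Ω → Prop)
    (hP0 : P ∅)
    (hPU : ∀ B : ℕ → Set Ω, (∀ n, MeasurableSet (B n)) → (∀ n, P (B n)) → P (⋃ n, B n)) :
    ∃ M : Set Ω, MeasurableSet M ∧ P M ∧
      ∀ B : Set Ω, MeasurableSet B → P B → μ (B \ M) = 0 := by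
  set S : Set ENNReal := {r | ∃ B : Set Ω, MeasurableSet B ∧ P B ∧ μ B = r} with hS
  have hSne : S.Nonempty := ⟨μ ∅, ∅, MeasurableSet.empty, hP0, rfl⟩
  obtain ⟨u, -, hu, huS⟩ := exists_seq_tendsto_sSup hSne (OrderTop.bddAbove S)
  choose B hBm hBP hBμ using huS
  have hMm : MeasurableSet (⋃ n, B n) := MeasurableSet.iUnion hBm
  have hMP : P (⋃ n, B n) := hPU B hBm hBP
  refine ⟨⋃ n, B n, hMm, hMP, ?_⟩
  have hmax : μ (⋃ n, B n) = sSup S := by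
    apply le_antisymm
    · exact le_sSup ⟨_, hMm, hMP, rfl⟩
    · refine le_of_tendsto hu (Filter.Eventually.of_forall fun n => ?_)
      rw [← hBμ n]; exact measure_mono (Set.subset_iUnion B n)
  intro B' hB'm hB'P
  set M := ⋃ n, B n with hM
  have hBM : P (B' ∪ M) := by
    have hv : (⋃ n, (fun n : ℕ => if n = 0 then B' else M) n) = B' ∪ M := by
      apply Set.Subset.antisymm
      · refine Set.iUnion_subset fun n => ?_
        split
        · exact Set.subset_union_left
        · exact Set.subset_union_right
      · rintro ω (h | h)
        · exact Set.mem_iUnion.mpr ⟨0, by simp [h]⟩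
        · exact Set.mem_iUnion.mpr ⟨1, by simp [h]⟩
    rw [← hv]
    refine hPU _ (fun n => ?_) (fun n => ?_)
    · split
      · exact hB'm
      · exact hMm
    · split
      · exact hB'P
      · exact hMP
  have hle : μ (B' ∪ M) ≤ μ M := by
    rw [hmax]; exact le_sSup ⟨_, hB'm.union hMm, hBM, rfl⟩
  have hsum : μ (B' \ M) + μ M ≤ 0 + μ M := by
    rw [zero_add]
    calc μ (B' \ M) + μ M = μ ((B' \ M) ∪ M) :=
          (measure_union Set.disjoint_sdiff_left hMm).symm
      _ = μ (B' ∪ M) := by rw [Set.diff_union_self]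
      _ ≤ μ M := hle
  exact nonpos_iff_eq_zero.mp ((ENNReal.add_le_add_iff_right (measure_ne_top μ M)).mp hsum)

private lemma agree_iUnion (μ : Measure Ω) (C : Set (Ω →ₘ[μ] ℝ)) (hne : C.Nonempty)
    (hcc : CSet μ C) (x : Ω →ₘ[μ] ℝ) (B : ℕ → Set Ω) (hB : ∀ n, MeasurableSet (B n))
    (hW : ∀ n, ∃ ξ ∈ C, ∀ᵐ ω ∂μ, ω ∈ B n → x ω = ξ ω) :
    ∃ ξ ∈ C, ∀ᵐ ω ∂μ, ω ∈ ⋃ n, B n → x ω = ξ ω := by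
  choose ξ hξC hξ using hW
  set D : ℕ → Set Ω := fun n => Nat.casesOn n (⋃ i, B i)ᶜ (fun k => disjointed B k) with hD
  have hDm : ∀ n, MeasurableSet (D n) := by
    rintro (_ | n)
    · exact (MeasurableSet.iUnion hB).compl
    · exact MeasurableSet.disjointed hB n
  have hDdisj : Pairwise (Function.onFun Disjoint D) := by
    rintro (_ | m) (_ | n) hmn
    · exact absurd rfl hmn
    · exact Set.disjoint_left.mpr fun ω h h' =>
        h (Set.subset_iUnion B n (disjointed_subset B n h'))
    · exact Set.disjoint_left.mpr fun ω h h' =>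
        h' (Set.subset_iUnion B m (disjointed_subset B m h))
    · exact disjoint_disjointed B (fun h => hmn (congrArg Nat.succ h))
  have hDcov : (⋃ n, D n) = Set.univ := by
    apply Set.eq_univ_of_forall
    intro ω
    by_cases h : ω ∈ ⋃ i, B i
    · have h2 : ω ∈ ⋃ k, disjointed B k := by rw [iUnion_disjointed]; exact h
      obtain ⟨k, hk⟩ := Set.mem_iUnion.mp h2
      exact Set.mem_iUnion.mpr ⟨k + 1, hk⟩
    · exact Set.mem_iUnion.mpr ⟨0, h⟩
  obtain ⟨z, hz⟩ := paste_ae μ D hDm hDdisj hDcov (fun n => Nat.casesOn n hne.choose ξ)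
  have hzC : z ∈ C := by
    refine hcc D hDm hDdisj hDcov _ ?_ z hz
    rintro (_ | n)
    · exact hne.choose_spec
    · exact hξC n
  refine ⟨z, hzC, ?_⟩
  have h1 : ∀ᵐ ω ∂μ, ∀ n, ω ∈ D (n+1) → z ω = ξ n ω := ae_all_iff.mpr fun n => hz (n+1)
  have h2 : ∀ᵐ ω ∂μ, ∀ n, ω ∈ B n → x ω = ξ n ω := ae_all_iff.mpr hξ
  filter_upwards [h1, h2] with ω h1 h2 hmem
  have h3 : ω ∈ ⋃ k, disjointed B k := by rw [iUnion_disjointed]; exact hmem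
  obtain ⟨k, hk⟩ := Set.mem_iUnion.mp h3
  exact (h2 k (disjointed_subset B k hk)).trans (h1 k hk).symm

private lemma exists_max_agree (μ : Measure Ω) [IsProbabilityMeasure μ]
    (C : Set (Ω →ₘ[μ] ℝ)) (hne : C.Nonempty) (hcc : CSet μ C) (x : Ω →ₘ[μ] ℝ) :
    ∃ M : Set Ω, MeasurableSet M ∧ (∃ ξ ∈ C, ∀ᵐ ω ∂μ, ω ∈ M → x ω = ξ ω) ∧
      ∀ B : Set Ω, MeasurableSet B → (∃ ξ ∈ C, ∀ᵐ ω ∂μ, ω ∈ B → x ω = ξ ω) →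
        μ (B \ M) = 0 :=
  exists_max_set μ _
    ⟨hne.choose, hne.choose_spec,
      Filter.Eventually.of_forall fun ω h => absurd h (Set.notMem_empty ω)⟩
    (fun B hB hP => agree_iUnion μ C hne hcc x B hB hP)

private lemma locOutside_iUnion (μ : Measure Ω) (C : Set (Ω →ₘ[μ] ℝ))
    (B : ℕ → Set Ω) (hB : ∀ n, MeasurableSet (B n))
    (hW : ∀ n, ∃ y : Ω →ₘ[μ] ℝ, LocOutside μ C y (B n)) :
    ∃ y : Ω →ₘ[μ] ℝ, LocOutside μ C y (⋃ n, B n) := by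
  choose y hy using hW
  set D : ℕ → Set Ω := fun n => Nat.casesOn n (⋃ i, B i)ᶜ (fun k => disjointed B k) with hD
  have hDm : ∀ n, MeasurableSet (D n) := by
    rintro (_ | n)
    · exact (MeasurableSet.iUnion hB).compl
    · exact MeasurableSet.disjointed hB n
  have hDdisj : Pairwise (Function.onFun Disjoint D) := by
    rintro (_ | m) (_ | n) hmn
    · exact absurd rfl hmn
    · exact Set.disjoint_left.mpr fun ω h h' =>
        h (Set.subset_iUnion B n (disjointed_subset B n h'))
    · exact Set.disjoint_left.mpr fun ω h h' =>
        h' (Set.subset_iUnion B m (disjointed_subset B m h))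
    · exact disjoint_disjointed B (fun h => hmn (congrArg Nat.succ h))
  have hDcov : (⋃ n, D n) = Set.univ := by
    apply Set.eq_univ_of_forall
    intro ω
    by_cases h : ω ∈ ⋃ i, B i
    · have h2 : ω ∈ ⋃ k, disjointed B k := by rw [iUnion_disjointed]; exact h
      obtain ⟨k, hk⟩ := Set.mem_iUnion.mp h2
      exact Set.mem_iUnion.mpr ⟨k + 1, hk⟩
    · exact Set.mem_iUnion.mpr ⟨0, h⟩
  obtain ⟨z, hz⟩ := paste_ae μ D hDm hDdisj hDcov (fun n => Nat.casesOn n (y 0) y)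
  refine ⟨z, ?_⟩
  rintro B' hB'm hB'sub hB'pos ⟨ξ, hξC, hξ⟩
  have hnotall : ¬ ∀ k, μ (B' ∩ disjointed B k) = 0 := by
    intro hall
    have hsub : B' ⊆ ⋃ k, B' ∩ disjointed B k := by
      intro ω hω
      have h3 : ω ∈ ⋃ k, disjointed B k := by rw [iUnion_disjointed]; exact hB'sub hω
      obtain ⟨k, hk⟩ := Set.mem_iUnion.mp h3
      exact Set.mem_iUnion.mpr ⟨k, hω, hk⟩
    have := (measure_mono hsub).trans_eq (measure_iUnion_null hall)
    exact hB'pos.ne' (nonpos_iff_eq_zero.mp this)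
  push_neg at hnotall
  obtain ⟨k, hk⟩ := hnotall
  refine hy k (B' ∩ disjointed B k) (hB'm.inter (MeasurableSet.disjointed hB k))
    (Set.inter_subset_right.trans (disjointed_subset B k)) (pos_iff_ne_zero.mpr hk)
    ⟨ξ, hξC, ?_⟩
  filter_upwards [hξ, hz (k+1)] with ω hω hzω hmem
  exact (hzω hmem.2).symm.trans (hω hmem.1)

private lemma exists_locOutside_pos (μ : Measure Ω) [IsProbabilityMeasure μ]
    (C : Set (Ω →ₘ[μ] ℝ)) (hne : C.Nonempty) (hcc : CSet μ C) (x : Ω →ₘ[μ] ℝ)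
    (E : Set Ω) (hEm : MeasurableSet E)
    (hEfail : ¬ ∃ ξ ∈ C, ∀ᵐ ω ∂μ, ω ∈ E → x ω = ξ ω) :
    ∃ H : Set Ω, MeasurableSet H ∧ H ⊆ E ∧ 0 < μ H ∧ LocOutside μ C x H ∧
      ∀ B : Set Ω, MeasurableSet B → (∃ ξ ∈ C, ∀ᵐ ω ∂μ, ω ∈ B → x ω = ξ ω) →
        μ (H ∩ B) = 0 := by
  obtain ⟨M, hMm, hMag, hMmax⟩ := exists_max_agree μ C hne hcc x
  refine ⟨E \ M, hEm.diff hMm, Set.diff_subset, ?_, ?_, ?_⟩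
  · by_contra hpos
    push_neg at hpos
    apply hEfail
    obtain ⟨ξ, hξC, hξ⟩ := hMag
    refine ⟨ξ, hξC, ?_⟩
    have hnull : ∀ᵐ ω ∂μ, ω ∉ E \ M :=
      measure_eq_zero_iff_ae_notMem.mp (nonpos_iff_eq_zero.mp hpos)
    filter_upwards [hξ, hnull] with ω hω h2 hE
    by_cases hM : ω ∈ M
    · exact hω hM
    · exact absurd ⟨hE, hM⟩ h2
  · rintro B hBm hBsub hBpos hexi
    have hBB : μ B ≤ μ (B \ M) := measure_mono fun ω h => ⟨h, (hBsub h).2⟩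
    exact hBpos.ne' (nonpos_iff_eq_zero.mp (hBB.trans_eq (hMmax B hBm hexi)))
  · intro B hBm hexi
    have hEB : μ ((E \ M) ∩ B) ≤ μ (B \ M) := measure_mono fun ω h => ⟨h.2, h.1.2⟩
    exact nonpos_iff_eq_zero.mp (hEB.trans_eq (hMmax B hBm hexi))

/-- **Relations between `H_{C,x}` and `D_C`.**  Let `C ⊆ L⁰` be nonempty with the
countable concatenation property, and let `A` be the maximal set `A_C`
(so `Aᶜ = D_C`).  Then: (1) if `x ∉ C` and `H` is the largest set on which `x` is
locally separated from `C`, then `H ⊆ D_C` up to null sets and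
`0 < μ H ≤ μ D_C`; (2) if moreover `x` is outside `C` then `H = D_C` up to
null sets; (3) if some `x ∉ C` exists, then some `y ∈ L⁰` is outside `C`. -/
theorem stmt15 (μ : Measure Ω) [IsProbabilityMeasure μ]
    (C : Set (Ω →ₘ[μ] ℝ)) (hne : C.Nonempty) (hcc : CSet μ C)
    (A : Set Ω) (hA : IsMaxFull μ C A) :
    (∀ x : Ω →ₘ[μ] ℝ, x ∉ C → ∀ H : Set Ω, IsMaxLocOutside μ C x H →
        μ (H \ Aᶜ) = 0 ∧ 0 < μ H ∧ μ H ≤ μ Aᶜ) ∧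
      (∀ x : Ω →ₘ[μ] ℝ, x ∉ C → LocOutside μ C x Aᶜ →
        ∀ H : Set Ω, IsMaxLocOutside μ C x H →
          μ (H \ Aᶜ) = 0 ∧ μ (Aᶜ \ H) = 0) ∧
      ((∃ x : Ω →ₘ[μ] ℝ, x ∉ C) → ∃ y : Ω →ₘ[μ] ℝ, LocOutside μ C y Aᶜ) := by
  obtain ⟨hAm, hAfull, hAmax⟩ := hA
  have key1 : ∀ x : Ω →ₘ[μ] ℝ, x ∉ C → ∀ H : Set Ω, IsMaxLocOutside μ C x H →
      μ (H \ Aᶜ) = 0 ∧ 0 < μ H ∧ μ H ≤ μ Aᶜ := by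
    intro x hx H hH
    obtain ⟨hHm, hHloc, hHmax⟩ := hH
    have hfail : ¬ ∃ ξ ∈ C, ∀ᵐ ω ∂μ, ω ∈ (Set.univ : Set Ω) → x ω = ξ ω := by
      rintro ⟨ξ, hξC, hξ⟩
      have hxξ : x = ξ := AEEqFun.ext (hξ.mono fun ω h => h (Set.mem_univ ω))
      exact hx (hxξ ▸ hξC)
    have hHA : μ (H \ Aᶜ) = 0 := by
      rw [Set.diff_compl]
      by_contra h
      have hpos : 0 < μ (H ∩ A) := pos_iff_ne_zero.mpr h
      obtain ⟨ξ, hξC, hξ⟩ := hAfull x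
      exact hHloc (H ∩ A) (hHm.inter hAm) Set.inter_subset_left hpos
        ⟨ξ, hξC, hξ.mono fun ω h hω => h hω.2⟩
    obtain ⟨H₀, hH₀m, -, hH₀pos, hH₀loc, -⟩ :=
      exists_locOutside_pos μ C hne hcc x Set.univ MeasurableSet.univ hfail
    have h0 : μ (H₀ \ H) = 0 := hHmax H₀ hH₀m hH₀loc
    have hHpos : 0 < μ H := by
      by_contra hz
      push_neg at hz
      have hz0 : μ H = 0 := nonpos_iff_eq_zero.mp hz
      have hsub : H₀ ⊆ (H₀ \ H) ∪ H := by
        intro ω h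
        by_cases hωH : ω ∈ H
        exacts [Or.inr hωH, Or.inl ⟨h, hωH⟩]
      have hle : μ H₀ ≤ μ (H₀ \ H) + μ H := (measure_mono hsub).trans (measure_union_le _ _)
      rw [h0, hz0, add_zero] at hle
      exact hH₀pos.ne' (nonpos_iff_eq_zero.mp hle)
    refine ⟨hHA, hHpos, ?_⟩
    have hsub : H ⊆ (H \ Aᶜ) ∪ Aᶜ := by
      intro ω h
      by_cases hωA : ω ∈ Aᶜ
      exacts [Or.inr hωA, Or.inl ⟨h, hωA⟩]
    calc μ H ≤ μ (H \ Aᶜ) + μ Aᶜ := (measure_mono hsub).trans (measure_union_le _ _)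
      _ = μ Aᶜ := by rw [hHA, zero_add]
  refine ⟨key1, ?_, ?_⟩
  · intro x hx hloc H hH
    exact ⟨(key1 x hx H hH).1, hH.2.2 Aᶜ hAm.compl hloc⟩
  · rintro ⟨x, hx⟩
    obtain ⟨M₃, hM₃m, ⟨y₀, hy₀⟩, hM₃max⟩ := exists_max_set μ
      (fun B => ∃ y : Ω →ₘ[μ] ℝ, LocOutside μ C y B)
      ⟨x, fun B _ hBsub hBpos _ =>
        hBpos.ne' (nonpos_iff_eq_zero.mp
          ((measure_mono hBsub).trans_eq measure_empty))⟩
      (fun B hB hP => locOutside_iUnion μ C B hB hP)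
    have hclaim : μ (Aᶜ \ M₃) = 0 := by
      by_contra hpos0
      have hGpos : 0 < μ (Aᶜ \ M₃) := pos_iff_ne_zero.mpr hpos0
      set G := Aᶜ \ M₃ with hG
      have hGm : MeasurableSet G := hAm.compl.diff hM₃m
      have hnotFull : ¬ FullOn μ C (A ∪ G) := by
        intro hFull
        have hdiff := hAmax (A ∪ G) (hAm.union hGm) hFull
        rw [Set.union_diff_left] at hdiff
        have hGA : G \ A = G :=
          Set.Subset.antisymm Set.diff_subset (fun ω h => ⟨h, h.1⟩)
        rw [hGA] at hdiff
        exact hGpos.ne' hdiff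
      rw [FullOn] at hnotFull
      push_neg at hnotFull
      obtain ⟨w, hw⟩ := hnotFull
      obtain ⟨Hw, hHwm, hHwsub, hHwpos, hHwloc, hHwnull⟩ :=
        exists_locOutside_pos μ C hne hcc w (A ∪ G) (hAm.union hGm)
          (by rintro ⟨ξ, hξC, hξ⟩; exact hw ξ hξC (hξ.mono fun ω h h' => h'.2 (h h'.1)))
      have h1 : μ (Hw ∩ A) = 0 := hHwnull A hAm (hAfull w)
      have h2 : μ (Hw \ M₃) = 0 := hM₃max Hw hHwm ⟨w, hHwloc⟩
      have hsub : Hw ⊆ (Hw ∩ A) ∪ (Hw \ M₃) := by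
        intro ω h
        by_cases hωA : ω ∈ A
        · exact Or.inl ⟨h, hωA⟩
        · rcases hHwsub h with h' | h'
          · exact absurd h' hωA
          · exact Or.inr ⟨h, h'.2⟩
      have hle : μ Hw ≤ μ (Hw ∩ A) + μ (Hw \ M₃) := (measure_mono hsub).trans (measure_union_le _ _)
      rw [h1, h2, add_zero] at hle
      exact hHwpos.ne' (nonpos_iff_eq_zero.mp hle)
    refine ⟨y₀, ?_⟩
    rintro B hBm hBsub hBpos ⟨ξ, hξC, hξ⟩
    have hBMpos : 0 < μ (B ∩ M₃) := by
      by_contra h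
      push_neg at h
      have h0 : μ (B ∩ M₃) = 0 := nonpos_iff_eq_zero.mp h
      have hsub : B ⊆ (B ∩ M₃) ∪ (Aᶜ \ M₃) := by
        intro ω hω
        by_cases hM : ω ∈ M₃
        exacts [Or.inl ⟨hω, hM⟩, Or.inr ⟨hBsub hω, hM⟩]
      have hle : μ B ≤ μ (B ∩ M₃) + μ (Aᶜ \ M₃) := (measure_mono hsub).trans (measure_union_le _ _)
      rw [h0, hclaim, add_zero] at hle
      exact hBpos.ne' (nonpos_iff_eq_zero.mp hle)
    exact hy₀ (B ∩ M₃) (hBm.inter hM₃m) Set.inter_subset_right hBMpos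
      ⟨ξ, hξC, hξ.mono fun ω h hω => h hω.1⟩
end

section
/- Let C, D ⊆ L⁰ be nonempty, and consider the classes 𝒜 = {B ∈ 𝒢 : for every y ∈ D^cc there exists ξ ∈ C^cc with y = ξ a.e. on B} and 𝒜^⊢ = {B ∈ 𝒢 : there exists y ∈ D^cc such that for every A ∈ 𝒢 with A ⊆ B and P(A) > 0 no ξ ∈ C^cc satisfies y = ξ a.e. on A}. Then there exist a maximal element A_M of 𝒜 and a maximal element A_M^⊢ of 𝒜^⊢ (maximal in the sense that every member of the class is contained in it up to null sets; one of the two may have zero probability), A_M^⊢ is a.s. the complement of A_M, and: for every y ∈ D^cc there exists ξ ∈ C^cc with y = ξ a.e. on A_M; and there exists y ∈ D^cc such that for every A ⊆ A_M^⊢ with P(A) > 0 no ξ ∈ C^cc satisfies y = ξ a.e. on A. -/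
open MeasureTheory

variable {Ω : Type*} [MeasurableSpace Ω]

open scoped ENNReal
attribute [local instance] Classical.propDecidable

lemma glue_exists (μ : Measure Ω) (A : ℕ → Set Ω) (hA : ∀ n, MeasurableSet (A n))
    (hdisj : Pairwise (Function.onFun Disjoint A)) (hcov : (⋃ n, A n) = Set.univ)
    (x : ℕ → Ω →ₘ[μ] ℝ) :
    ∃ z : Ω →ₘ[μ] ℝ, ∀ n, ∀ᵐ ω ∂μ, ω ∈ A n → z ω = x n ω := by
  have hex : ∀ ω : Ω, ∃ n, ω ∈ A n := by
    intro ω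
    have : ω ∈ ⋃ n, A n := hcov ▸ Set.mem_univ ω
    exact Set.mem_iUnion.1 this
  set m : ℕ → Ω → ℝ := fun n => ((x n).aestronglyMeasurable).mk _ with hm
  have hmmeas : ∀ n, Measurable (m n) := fun n =>
    (((x n).aestronglyMeasurable).stronglyMeasurable_mk).measurable
  have hmeq : ∀ n, (x n : Ω → ℝ) =ᵐ[μ] m n := fun n => ((x n).aestronglyMeasurable).ae_eq_mk
  set g : Ω → ℝ := fun ω => m (Nat.find (hex ω)) ω with hg
  have key : ∀ ω n, ω ∈ A n → g ω = m n ω := by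
    intro ω n hω
    have h1 : ω ∈ A (Nat.find (hex ω)) := Nat.find_spec (hex ω)
    rcases eq_or_ne (Nat.find (hex ω)) n with h | h
    · show m (Nat.find (hex ω)) ω = m n ω; rw [h]
    · exact absurd hω ((Set.disjoint_left.1 (hdisj h)) h1)
  have hgmeas : Measurable g := by
    intro s hs
    have : g ⁻¹' s = ⋃ n, A n ∩ (m n) ⁻¹' s := by
      ext ω
      constructor
      · intro h
        have hg' : g ω ∈ s := h
        rw [key ω _ (Nat.find_spec (hex ω))] at hg'
        exact Set.mem_iUnion.2 ⟨Nat.find (hex ω), Nat.find_spec (hex ω), hg'⟩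
      · intro h
        rcases Set.mem_iUnion.1 h with ⟨n, hn, hs'⟩
        simpa [Set.mem_preimage, key ω n hn] using hs'
    rw [this]
    exact MeasurableSet.iUnion fun n => (hA n).inter (hmmeas n hs)
  refine ⟨AEEqFun.mk g hgmeas.aestronglyMeasurable, fun n => ?_⟩
  filter_upwards [AEEqFun.coeFn_mk g hgmeas.aestronglyMeasurable, hmeq n] with ω hz hx hmem
  rw [hz, key ω n hmem, ← hx]

lemma subset_ccHull (μ : Measure Ω) (C : Set (Ω →ₘ[μ] ℝ)) : C ⊆ ccHull μ C := by
  intro x hx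
  refine ⟨fun n => if n = 0 then Set.univ else ∅, fun _ => x, fun n => by
    by_cases h : n = 0 <;> simp [h], ?_, ?_, fun _ => hx, fun n => Filter.Eventually.of_forall ?_⟩
  · intro i j hij
    rcases eq_or_ne i 0 with hi | hi <;> rcases eq_or_ne j 0 with hj | hj <;>
      simp_all [Function.onFun]
  · apply Set.eq_univ_of_univ_subset
    intro ω _
    exact Set.mem_iUnion.2 ⟨0, by simp⟩
  · intro ω _; rfl

/-- Gluing countably many elements of the hull along a partition stays in the hull. -/
lemma ccHull_glue (μ : Measure Ω) (C : Set (Ω →ₘ[μ] ℝ)) (A : ℕ → Set Ω)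
    (hA : ∀ n, MeasurableSet (A n)) (hdisj : Pairwise (Function.onFun Disjoint A))
    (hcov : (⋃ n, A n) = Set.univ) (x : ℕ → Ω →ₘ[μ] ℝ) (hx : ∀ n, x n ∈ ccHull μ C)
    (z : Ω →ₘ[μ] ℝ) (hz : ∀ n, ∀ᵐ ω ∂μ, ω ∈ A n → z ω = x n ω) : z ∈ ccHull μ C := by
  choose A' x' hA' hdisj' hcov' hxC' hagree' using hx
  set e : ℕ ≃ ℕ × ℕ := (Denumerable.eqv (ℕ × ℕ)).symm with he
  refine ⟨fun k => A (e k).1 ∩ A' (e k).1 (e k).2, fun k => x' (e k).1 (e k).2,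
    fun k => (hA _).inter (hA' _ _), ?_, ?_, fun k => hxC' _ _, fun k => ?_⟩
  · intro i j hij
    have : e i ≠ e j := fun h => hij (e.injective h)
    rcases eq_or_ne (e i).1 (e j).1 with h1 | h1
    · have h2 : (e i).2 ≠ (e j).2 := fun h2 => this (Prod.ext h1 h2)
      exact Set.disjoint_of_subset Set.inter_subset_right Set.inter_subset_right
        (h1 ▸ hdisj' (e i).1 h2)
    · exact Set.disjoint_of_subset Set.inter_subset_left Set.inter_subset_left (hdisj h1)
  · apply Set.eq_univ_of_univ_subset
    intro ω _
    have h1 : ω ∈ ⋃ n, A n := hcov ▸ Set.mem_univ ω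
    rcases Set.mem_iUnion.1 h1 with ⟨n, hn⟩
    have h2 : ω ∈ ⋃ m, A' n m := (hcov' n) ▸ Set.mem_univ ω
    rcases Set.mem_iUnion.1 h2 with ⟨m, hm⟩
    exact Set.mem_iUnion.2 ⟨e.symm (n, m), by simp [he, hn, hm]⟩
  · filter_upwards [hz (e k).1, hagree' (e k).1 (e k).2] with ω h1 h2 hmem
    rw [h1 hmem.1, h2 hmem.2]

lemma exhaustion (μ : Measure Ω) [IsProbabilityMeasure μ] (P : Set Ω → Prop)
    (hempty : P ∅)
    (hunion : ∀ B : ℕ → Set Ω, (∀ n, MeasurableSet (B n)) → (∀ n, P (B n)) →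
      P (⋃ n, B n)) :
    ∃ M : Set Ω, MeasurableSet M ∧ P M ∧
      ∀ B : Set Ω, MeasurableSet B → P B → μ (B \ M) = 0 := by
  set s : ℝ≥0∞ := ⨆ (B : {B : Set Ω // MeasurableSet B ∧ P B}), μ B with hs
  have hexB : ∀ n : ℕ, ∃ B : {B : Set Ω // MeasurableSet B ∧ P B},
      s ≤ μ B + ((n : ℝ≥0∞) + 1)⁻¹ := by
    intro n
    rcases eq_or_ne s 0 with h0 | h0
    · exact ⟨⟨∅, MeasurableSet.empty, hempty⟩, by simp [h0]⟩
    · have hsne : s ≠ ⊤ := by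
        refine ne_top_of_le_ne_top (by simp : (1 : ℝ≥0∞) ≠ ⊤) (iSup_le fun B => ?_)
        exact (measure_mono (Set.subset_univ _)).trans (le_of_eq measure_univ)
      have hlt : s - ((n : ℝ≥0∞) + 1)⁻¹ < s :=
        ENNReal.sub_lt_self hsne h0 (by simp)
      rcases lt_iSup_iff.1 hlt with ⟨B, hB⟩
      refine ⟨B, ?_⟩
      have := (tsub_le_iff_right).1 hB.le
      exact this
  choose Bn hBn using hexB
  set M : Set Ω := ⋃ n, (Bn n : Set Ω) with hM
  have hMmeas : MeasurableSet M := MeasurableSet.iUnion fun n => (Bn n).2.1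
  have hMP : P M := hunion _ (fun n => (Bn n).2.1) (fun n => (Bn n).2.2)
  have hMs : s ≤ μ M := by
    refine ENNReal.le_of_forall_pos_le_add fun ε hε _ => ?_
    obtain ⟨n, hn⟩ := ENNReal.exists_inv_nat_lt
      (show (ε : ℝ≥0∞) ≠ 0 by exact_mod_cast hε.ne')
    calc s ≤ μ (Bn n) + ((n : ℝ≥0∞) + 1)⁻¹ := hBn n
    _ ≤ μ M + (n : ℝ≥0∞)⁻¹ :=
        add_le_add (measure_mono (Set.subset_iUnion (fun k => (Bn k : Set Ω)) n))
          (ENNReal.inv_le_inv.2 le_self_add)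
    _ ≤ μ M + ε := add_le_add le_rfl hn.le
  have hMs' : μ M = s := le_antisymm (le_iSup_of_le ⟨M, hMmeas, hMP⟩ le_rfl) hMs
  refine ⟨M, hMmeas, hMP, fun B hB hPB => ?_⟩
  have hBM : P (B ∪ M) := by
    have := hunion (fun n => if n = 0 then B else M) (fun n => by
      by_cases h : n = 0 <;> simp [h, hB, hMmeas]) (fun n => by
      by_cases h : n = 0 <;> simp [h, hPB, hMP])
    convert this using 1
    ext ω
    simp only [Set.mem_union, Set.mem_iUnion]
    constructor
    · rintro (h | h)
      · exact ⟨0, by simp [h]⟩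
      · exact ⟨1, by simp [h]⟩
    · rintro ⟨n, hn⟩
      by_cases h : n = 0
      · left; simpa [h] using hn
      · right; simpa [h] using hn
  have h1 : μ (B ∪ M) ≤ s := le_iSup_of_le ⟨B ∪ M, hB.union hMmeas, hBM⟩ le_rfl
  have h2 : μ (B ∪ M) = μ (B \ M) + μ M := by
    rw [← Set.diff_union_self, measure_union Set.disjoint_sdiff_left hMmeas]
  have h3 : μ (B \ M) + μ M ≤ μ M := by rw [← h2, hMs']; exact h1
  have hfin : μ M ≠ ⊤ := (measure_lt_top μ M).ne
  have h4 : μ (B \ M) + μ M ≤ 0 + μ M := by simpa using h3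
  exact le_antisymm ((ENNReal.add_le_add_iff_right hfin).1 h4) zero_le

/-- Glue elements of the hull along the disjointed version of an arbitrary
measurable sequence of sets. -/
lemma glue_partition (μ : Measure Ω) (C : Set (Ω →ₘ[μ] ℝ)) (hC : (ccHull μ C).Nonempty)
    (B : ℕ → Set Ω) (hB : ∀ n, MeasurableSet (B n))
    (x : ℕ → Ω →ₘ[μ] ℝ) (hx : ∀ n, x n ∈ ccHull μ C) :
    ∃ z ∈ ccHull μ C, ∀ n, ∀ᵐ ω ∂μ, ω ∈ disjointed B n → z ω = x n ω := by
  obtain ⟨x₀, hx₀⟩ := hC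
  set F : ℕ → Set Ω := fun k => Nat.casesOn k ((⋃ n, B n)ᶜ) (fun n => disjointed B n)
    with hF
  have hFmeas : ∀ k, MeasurableSet (F k) := by
    intro k
    cases k with
    | zero => exact (MeasurableSet.iUnion hB).compl
    | succ n => exact MeasurableSet.disjointed hB n
  have hFdisj : Pairwise (Function.onFun Disjoint F) := by
    intro i j hij
    have key : ∀ n : ℕ, Disjoint (F 0) (F (n + 1)) := by
      intro n
      refine Set.disjoint_left.2 fun ω hω h2 => ?_
      exact hω (Set.mem_iUnion.2 ⟨n, disjointed_subset B n h2⟩)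
    match i, j with
    | 0, 0 => exact absurd rfl hij
    | 0, (j+1) => exact key j
    | (i+1), 0 => exact (key i).symm
    | (i+1), (j+1) =>
      exact disjoint_disjointed B (fun h => hij (by rw [h]))
  have hFcov : (⋃ k, F k) = Set.univ := by
    apply Set.eq_univ_of_univ_subset
    intro ω _
    by_cases h : ω ∈ ⋃ n, B n
    · rw [← iUnion_disjointed] at h
      rcases Set.mem_iUnion.1 h with ⟨n, hn⟩
      exact Set.mem_iUnion.2 ⟨n + 1, hn⟩
    · exact Set.mem_iUnion.2 ⟨0, h⟩
  set x' : ℕ → Ω →ₘ[μ] ℝ := fun k => Nat.casesOn k x₀ x with hx'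
  have hx'mem : ∀ k, x' k ∈ ccHull μ C := by
    intro k; cases k with
    | zero => exact hx₀
    | succ n => exact hx n
  obtain ⟨z, hz⟩ := glue_exists μ F hFmeas hFdisj hFcov x'
  exact ⟨z, ccHull_glue μ C F hFmeas hFdisj hFcov x' hx'mem z hz, fun n => hz (n + 1)⟩

/-- Glue agreements with a fixed `y` along a countable union. -/
lemma glue_on_iUnion (μ : Measure Ω) (C : Set (Ω →ₘ[μ] ℝ)) (hC : (ccHull μ C).Nonempty)
    (B : ℕ → Set Ω) (hB : ∀ n, MeasurableSet (B n)) (y : Ω →ₘ[μ] ℝ)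
    (ξ : ℕ → Ω →ₘ[μ] ℝ) (hξ : ∀ n, ξ n ∈ ccHull μ C)
    (hagree : ∀ n, ∀ᵐ ω ∂μ, ω ∈ B n → y ω = ξ n ω) :
    ∃ ξ' ∈ ccHull μ C, ∀ᵐ ω ∂μ, ω ∈ ⋃ n, B n → y ω = ξ' ω := by
  obtain ⟨z, hzmem, hz⟩ := glue_partition μ C hC B hB ξ hξ
  refine ⟨z, hzmem, ?_⟩
  have h1 : ∀ᵐ ω ∂μ, ∀ n, ω ∈ disjointed B n → z ω = ξ n ω := (ae_all_iff).2 hz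
  have h2 : ∀ᵐ ω ∂μ, ∀ n, ω ∈ B n → y ω = ξ n ω := (ae_all_iff).2 hagree
  filter_upwards [h1, h2] with ω h1 h2 hmem
  rw [← iUnion_disjointed] at hmem
  rcases Set.mem_iUnion.1 hmem with ⟨n, hn⟩
  rw [h1 n hn, ← h2 n (disjointed_subset B n hn)]


/-- **Maximal full / maximal separated stratification for a pair of sets.**
Let `C, D ⊆ L⁰` be nonempty.  Consider the class `𝒜` of measurable `B` such that
every `y ∈ D^cc` agrees a.e. on `B` with some `ξ ∈ C^cc`, and the class `𝒜^⊢` of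
measurable `B` such that some `y ∈ D^cc` is locally separated from `C^cc` on `B`.
Then `𝒜` and `𝒜^⊢` have maximal elements `A_M`, `A_M^⊢` (up to null sets),
`A_M^⊢` is a.s. the complement of `A_M`, and the defining properties hold on
`A_M` and `A_M^⊢` respectively. -/
theorem stmt16 (μ : Measure Ω) [IsProbabilityMeasure μ]
    (C D : Set (Ω →ₘ[μ] ℝ)) (hC : C.Nonempty) (hD : D.Nonempty) :
    ∃ AM AM' : Set Ω, MeasurableSet AM ∧ MeasurableSet AM' ∧
      μ (AM ∩ AM') = 0 ∧ μ (AM ∪ AM') = 1 ∧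
      (∀ B : Set Ω, MeasurableSet B →
        (∀ y ∈ ccHull μ D, ∃ ξ ∈ ccHull μ C, ∀ᵐ ω ∂μ, ω ∈ B → y ω = ξ ω) →
        μ (B \ AM) = 0) ∧
      (∀ B : Set Ω, MeasurableSet B →
        (∃ y ∈ ccHull μ D, LocOutside μ (ccHull μ C) y B) →
        μ (B \ AM') = 0) ∧
      (∀ y ∈ ccHull μ D, ∃ ξ ∈ ccHull μ C, ∀ᵐ ω ∂μ, ω ∈ AM → y ω = ξ ω) ∧
      (∃ y ∈ ccHull μ D, LocOutside μ (ccHull μ C) y AM') := by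
  obtain ⟨x₀, hx₀⟩ : (ccHull μ C).Nonempty := hC.elim fun x hx => ⟨x, subset_ccHull μ C hx⟩
  obtain ⟨y₀, hy₀⟩ : (ccHull μ D).Nonempty := hD.elim fun y hy => ⟨y, subset_ccHull μ D hy⟩
  set P1 : Set Ω → Prop :=
    fun B => ∀ y ∈ ccHull μ D, ∃ ξ ∈ ccHull μ C, ∀ᵐ ω ∂μ, ω ∈ B → y ω = ξ ω with hP1
  have hP1empty : P1 ∅ := fun y _ =>
    ⟨x₀, hx₀, Filter.Eventually.of_forall fun ω h => absurd h (Set.notMem_empty ω)⟩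
  have hP1union : ∀ B : ℕ → Set Ω, (∀ n, MeasurableSet (B n)) → (∀ n, P1 (B n)) →
      P1 (⋃ n, B n) := by
    intro B hB hP y hy
    choose ξ hξmem hξag using fun n => hP n y hy
    exact glue_on_iUnion μ C ⟨x₀, hx₀⟩ B hB y ξ hξmem hξag
  obtain ⟨AM, hAMm, hAMP, hAMmax⟩ := exhaustion μ P1 hP1empty hP1union
  set P2 : Set Ω → Prop :=
    fun B => ∃ y ∈ ccHull μ D, LocOutside μ (ccHull μ C) y B with hP2
  have hP2empty : P2 ∅ := by
    refine ⟨y₀, hy₀, fun B hB hsub hpos _ => ?_⟩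
    rw [Set.subset_empty_iff.1 hsub] at hpos
    simp at hpos
  have hP2union : ∀ B : ℕ → Set Ω, (∀ n, MeasurableSet (B n)) → (∀ n, P2 (B n)) →
      P2 (⋃ n, B n) := by
    intro B hB hP
    choose y hymem hyout using hP
    obtain ⟨z, hzmem, hz⟩ := glue_partition μ D ⟨y₀, hy₀⟩ B hB y hymem
    refine ⟨z, hzmem, ?_⟩
    rintro A hA hsub hpos ⟨ξ, hξ, hag⟩
    have hcover : A = ⋃ n, A ∩ disjointed B n := by
      rw [← Set.inter_iUnion, iUnion_disjointed]
      exact (Set.inter_eq_left.2 hsub).symm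
    obtain ⟨n, hn⟩ : ∃ n, 0 < μ (A ∩ disjointed B n) := by
      by_contra h
      push_neg at h
      have hA0 : μ A = 0 := by
        rw [hcover]
        exact measure_iUnion_null fun n => le_antisymm (h n) zero_le
      exact absurd hA0 hpos.ne'
    refine hyout n (A ∩ disjointed B n) (hA.inter (MeasurableSet.disjointed hB n))
      (Set.inter_subset_right.trans (disjointed_subset B n)) hn ⟨ξ, hξ, ?_⟩
    filter_upwards [hz n, hag] with ω h1 h2 hmem
    rw [← h1 hmem.2, h2 hmem.1]
  obtain ⟨AM', hAM'm, hAM'P, hAM'max⟩ := exhaustion μ P2 hP2empty hP2union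
  obtain ⟨ystar, hystar, hyout⟩ := hAM'P
  have hinter : μ (AM ∩ AM') = 0 := by
    by_contra h
    have hpos : 0 < μ (AM ∩ AM') := pos_iff_ne_zero.2 h
    obtain ⟨ξ, hξ, hag⟩ := hAMP ystar hystar
    refine hyout (AM ∩ AM') (hAMm.inter hAM'm) Set.inter_subset_right hpos ⟨ξ, hξ, ?_⟩
    filter_upwards [hag] with ω h hmem
    exact h hmem.1
  set G : Set Ω := (AM ∪ AM')ᶜ with hG
  have hGm : MeasurableSet G := (hAMm.union hAM'm).compl
  have hGnull : μ G = 0 := by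
    have hP1AMG : P1 (AM ∪ G) := by
      intro y hy
      set Py : Set Ω → Prop :=
        fun B => ∃ ξ ∈ ccHull μ C, ∀ᵐ ω ∂μ, ω ∈ B → y ω = ξ ω with hPy
      have hPyempty : Py ∅ :=
        ⟨x₀, hx₀, Filter.Eventually.of_forall fun ω h => absurd h (Set.notMem_empty ω)⟩
      have hPyunion : ∀ B : ℕ → Set Ω, (∀ n, MeasurableSet (B n)) → (∀ n, Py (B n)) →
          Py (⋃ n, B n) := by
        intro B hB hP
        choose ξ hξmem hξag using hP
        exact glue_on_iUnion μ C ⟨x₀, hx₀⟩ B hB y ξ hξmem hξag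
      obtain ⟨My, hMym, ⟨ξy, hξy, hξyag⟩, hMymax⟩ := exhaustion μ Py hPyempty hPyunion
      have hout : LocOutside μ (ccHull μ C) y Myᶜ := by
        intro A hA hsub hpos hex
        have h0 := hMymax A hA hex
        have hAeq : A \ My = A := by
          apply Set.eq_of_subset_of_subset Set.diff_subset
          intro ω hω
          exact ⟨hω, hsub hω⟩
        rw [hAeq] at h0
        exact absurd h0 hpos.ne'
      have h1 : μ (Myᶜ \ AM') = 0 := hAM'max Myᶜ hMym.compl ⟨y, hy, hout⟩
      have h2 : μ (G \ My) = 0 := by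
        refine measure_mono_null (fun ω hω => ?_) h1
        exact ⟨hω.2, fun ham' => hω.1 (Or.inr ham')⟩
      have hagG : ∀ᵐ ω ∂μ, ω ∈ G → y ω = ξy ω := by
        have hnull : ∀ᵐ ω ∂μ, ω ∉ G \ My := measure_eq_zero_iff_ae_notMem.1 h2
        filter_upwards [hξyag, hnull] with ω ha hb hmem
        rcases Classical.em (ω ∈ My) with h | h
        · exact ha h
        · exact absurd ⟨hmem, h⟩ hb
      obtain ⟨ξA, hξA, hξAag⟩ := hAMP y hy
      set B2 : ℕ → Set Ω := fun n => if n = 0 then AM else if n = 1 then G else ∅ with hB2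
      set ξ2 : ℕ → Ω →ₘ[μ] ℝ := fun n => if n = 0 then ξA else ξy with hξ2
      have hB2m : ∀ n, MeasurableSet (B2 n) := by
        intro n
        by_cases h0 : n = 0
        · simpa [hB2, h0] using hAMm
        · by_cases h1 : n = 1 <;> simp [hB2, h0, h1, hGm]
      have hξ2mem : ∀ n, ξ2 n ∈ ccHull μ C := by
        intro n; by_cases h0 : n = 0 <;> simp [hξ2, h0, hξA, hξy]
      have hξ2ag : ∀ n, ∀ᵐ ω ∂μ, ω ∈ B2 n → y ω = ξ2 n ω := by
        intro n
        by_cases h0 : n = 0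
        · simpa [hB2, hξ2, h0] using hξAag
        · by_cases h1 : n = 1
          · simpa [hB2, hξ2, h0, h1] using hagG
          · simp only [hB2, hξ2, h0, h1, if_false]
            exact Filter.Eventually.of_forall fun ω h => absurd h (Set.notMem_empty ω)
      obtain ⟨ξ', hξ', hag'⟩ := glue_on_iUnion μ C ⟨x₀, hx₀⟩ B2 hB2m y ξ2 hξ2mem hξ2ag
      refine ⟨ξ', hξ', ?_⟩
      filter_upwards [hag'] with ω h hmem
      apply h
      rcases hmem with h' | h'
      · exact Set.mem_iUnion.2 ⟨0, by simpa [hB2] using h'⟩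
      · exact Set.mem_iUnion.2 ⟨1, by simpa [hB2] using h'⟩
    have hmax := hAMmax (AM ∪ G) (hAMm.union hGm) hP1AMG
    have heq : (AM ∪ G) \ AM = G := by
      ext ω
      constructor
      · rintro ⟨h1 | h1, h2⟩
        · exact absurd h1 h2
        · exact h1
      · intro h
        exact ⟨Or.inr h, fun hAM => h (Or.inl hAM)⟩
    rwa [heq] at hmax
  have hunion1 : μ (AM ∪ AM') = 1 := by
    rw [← prob_compl_eq_zero_iff (hAMm.union hAM'm)]
    exact hGnull
  exact ⟨AM, AM', hAMm, hAM'm, hinter, hunion1, hAMmax, hAM'max, hAMP,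
    ⟨ystar, hystar, hyout⟩⟩
end

section
/- Let π : L⁰ → L̄⁰ be regular (REG). Then: (a) π satisfies the quasiconvexity inequality π(Λ·x₁ + (1−Λ)·x₂) ≤ max{π(x₁), π(x₂)} a.s. for all x₁, x₂ ∈ L⁰ and all 𝒢-measurable Λ with 0 ≤ Λ ≤ 1 a.s., if and only if for every Y ∈ L⁰ the lower level set U_Y = {ξ ∈ L⁰ : π(ξ)·1_{T_π} ≤ Y} is L⁰-convex; (b) if the quasiconvexity inequality holds, then for every Y ∈ L̄⁰ and every D ∈ 𝒢 the set {ξ ∈ L⁰ : π(ξ) < Y a.e. on D} is L⁰-convex. -/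
open MeasureTheory
open scoped Classical ENNReal

variable {Ω : Type*} [MeasurableSpace Ω]

/-- `f ≤ g` almost everywhere (the a.e. order on `L̄⁰`). -/
def AELE (μ : Measure Ω) (f g : Ω → EReal) : Prop := ∀ᵐ ω ∂μ, f ω ≤ g ω

/-- `g` is the greatest lower bound, in the a.e. order, of the family `S ⊆ L̄⁰`.
(For `S = ∅` this forces `g = +∞` a.e., which is the paper's convention.) -/
def IsAEGLB (μ : Measure Ω) (S : Set (Ω → EReal)) (g : Ω → EReal) : Prop :=
  (∀ f ∈ S, AELE μ g f) ∧ ∀ h : Ω → EReal, (∀ f ∈ S, AELE μ h f) → AELE μ h g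

/-- `g` is the least upper bound, in the a.e. order, of the family `S ⊆ L̄⁰`. -/
def IsAELUB (μ : Measure Ω) (S : Set (Ω → EReal)) (g : Ω → EReal) : Prop :=
  (∀ f ∈ S, AELE μ f g) ∧ ∀ h : Ω → EReal, (∀ f ∈ S, AELE μ f h) → AELE μ g h

/-- Regularity (REG): `π (x·1_A + y·1_{Aᶜ}) = π x · 1_A + π y · 1_{Aᶜ}` for all
`x, y ∈ L⁰` and measurable `A`, expressed via an arbitrary representative `z` of
`x·1_A + y·1_{Aᶜ}`. -/
def Reg (μ : Measure Ω) (π : (Ω →ₘ[μ] ℝ) → Ω → EReal) : Prop :=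
  ∀ (x y : Ω →ₘ[μ] ℝ) (A : Set Ω), MeasurableSet A →
    ∀ z : Ω →ₘ[μ] ℝ, (∀ᵐ ω ∂μ, z ω = if ω ∈ A then x ω else y ω) →
      ∀ᵐ ω ∂μ, π z ω = if ω ∈ A then π x ω else π y ω

/-- `U` is (a version of) the maximal set `Υ_π` on which `π ≡ +∞`; its complement
is `T_π`. -/
def IsMaxInfty (μ : Measure Ω) (π : (Ω →ₘ[μ] ℝ) → Ω → EReal) (U : Set Ω) : Prop :=
  MeasurableSet U ∧ (∀ ξ : Ω →ₘ[μ] ℝ, ∀ᵐ ω ∂μ, ω ∈ U → π ξ ω = ⊤) ∧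
    ∀ B : Set Ω, MeasurableSet B → (∀ ξ : Ω →ₘ[μ] ℝ, ∀ᵐ ω ∂μ, ω ∈ B → π ξ ω = ⊤) →
      μ (B \ U) = 0

/-- The lower level set `U_Y = {ξ ∈ L⁰ ∣ π(ξ)·1_T ≤ Y}` (with the convention
`(+∞)·0 = 0` off `T`). -/
def levelSet (μ : Measure Ω) (π : (Ω →ₘ[μ] ℝ) → Ω → EReal) (T : Set Ω)
    (Y : Ω →ₘ[μ] ℝ) : Set (Ω →ₘ[μ] ℝ) :=
  {ξ | ∀ᵐ ω ∂μ, (if ω ∈ T then π ξ ω else 0) ≤ (Y ω : EReal)}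

/-- `S ⊆ L⁰` is `L⁰`-convex. -/
def L0Convex (μ : Measure Ω) (S : Set (Ω →ₘ[μ] ℝ)) : Prop :=
  ∀ x ∈ S, ∀ y ∈ S, ∀ Λ : Ω →ₘ[μ] ℝ, (∀ᵐ ω ∂μ, 0 ≤ Λ ω ∧ Λ ω ≤ 1) →
    Λ * x + (1 - Λ) * y ∈ S

/-- The family `{π ξ ∣ ξ ∈ L⁰, ξ·x' ≥ Y a.s.}` whose a.e.-greatest lower bound
is `R(Y, x')`. -/
def RFamily (μ : Measure Ω) (π : (Ω →ₘ[μ] ℝ) → Ω → EReal) (Y x' : Ω →ₘ[μ] ℝ) :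
    Set (Ω → EReal) :=
  {g | ∃ ξ : Ω →ₘ[μ] ℝ, (∀ᵐ ω ∂μ, Y ω ≤ ξ ω * x' ω) ∧ g = π ξ}

noncomputable def paste (μ : Measure Ω) (x y : Ω →ₘ[μ] ℝ) (A : Set Ω) (hA : MeasurableSet A) : Ω →ₘ[μ] ℝ :=
  AEEqFun.mk (fun ω => if ω ∈ A then x.aemeasurable.mk _ ω else y.aemeasurable.mk _ ω)
    ((Measurable.ite hA x.aemeasurable.measurable_mk y.aemeasurable.measurable_mk).aestronglyMeasurable)

lemma coeFn_paste (μ : Measure Ω) (x y : Ω →ₘ[μ] ℝ) (A : Set Ω) (hA : MeasurableSet A) :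
    ∀ᵐ ω ∂μ, (paste μ x y A hA) ω = if ω ∈ A then x ω else y ω := by
  have h1 : ∀ᵐ ω ∂μ, (paste μ x y A hA) ω
      = (fun ω => if ω ∈ A then x.aemeasurable.mk _ ω else y.aemeasurable.mk _ ω) ω :=
    AEEqFun.coeFn_mk _ _
  filter_upwards [h1, x.aemeasurable.ae_eq_mk, y.aemeasurable.ae_eq_mk] with ω h1 h2 h3
  rw [h1]; split <;> simp [h2, h3]

lemma reg_paste (μ : Measure Ω) (π : (Ω →ₘ[μ] ℝ) → Ω → EReal) (hreg : Reg μ π)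
    (x y : Ω →ₘ[μ] ℝ) (A : Set Ω) (hA : MeasurableSet A) :
    ∀ᵐ ω ∂μ, π (paste μ x y A hA) ω = if ω ∈ A then π x ω else π y ω :=
  hreg x y A hA _ (coeFn_paste μ x y A hA)


lemma exists_xi0 (μ : Measure Ω) [IsProbabilityMeasure μ]
    (π : (Ω →ₘ[μ] ℝ) → Ω → EReal)
    (hmeas : ∀ ξ : Ω →ₘ[μ] ℝ, Measurable (π ξ)) (hreg : Reg μ π)
    (U : Set Ω) (hU : IsMaxInfty μ π U) :
    ∃ ξ₀ : Ω →ₘ[μ] ℝ, ∀ᵐ ω ∂μ, ω ∈ Uᶜ → π ξ₀ ω ≠ ⊤ := by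
  have mSet : ∀ x : Ω →ₘ[μ] ℝ, MeasurableSet {ω | π x ω ≠ ⊤} :=
    fun x => ((hmeas x) (measurableSet_singleton ⊤)).compl
  have mSet' : ∀ x : Ω →ₘ[μ] ℝ, MeasurableSet {ω | π x ω = ⊤} :=
    fun x => (hmeas x) (measurableSet_singleton ⊤)
  set c := ⨅ ξ : Ω →ₘ[μ] ℝ, μ (Uᶜ ∩ {ω | π ξ ω = ⊤}) with hc
  have hcne : c ≠ ⊤ := ne_top_of_le_ne_top (measure_ne_top μ _) (iInf_le _ 0)
  set δ : ℕ → ℝ≥0∞ := fun n => ((n : ℝ≥0∞) + 1)⁻¹ with hδ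
  have hδ0 : ∀ n, δ n ≠ 0 := fun n => ENNReal.inv_ne_zero.mpr (by simp)
  have hsel : ∀ n : ℕ, ∃ ξ : Ω →ₘ[μ] ℝ, μ (Uᶜ ∩ {ω | π ξ ω = ⊤}) < c + δ n := by
    intro n
    exact iInf_lt_iff.mp (ENNReal.lt_add_right hcne (hδ0 n))
  choose ξs hξs using hsel
  obtain ⟨η, hη0, hηs⟩ : ∃ η : ℕ → Ω →ₘ[μ] ℝ, η 0 = ξs 0 ∧
      ∀ n, η (n+1) = paste μ (η n) (ξs (n+1)) {ω | π (η n) ω ≠ ⊤} (mSet (η n)) :=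
    ⟨fun n => Nat.rec (ξs 0) (fun k prev => paste μ prev (ξs (k+1)) {ω | π prev ω ≠ ⊤} (mSet prev)) n,
      rfl, fun n => rfl⟩
  set S : ℕ → Set Ω := fun n => {ω | π (η n) ω = ⊤} with hSdef
  have hS : ∀ n, ∀ᵐ ω ∂μ, ω ∈ S (n+1) → ω ∈ S n ∧ π (ξs (n+1)) ω = ⊤ := by
    intro n
    have h := reg_paste μ π hreg (η n) (ξs (n+1)) {ω | π (η n) ω ≠ ⊤} (mSet (η n))
    rw [← hηs n] at h
    filter_upwards [h] with ω h hmem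
    have hmem' : π (η (n+1)) ω = ⊤ := hmem
    by_cases htop : π (η n) ω = ⊤
    · rw [if_neg (fun hc : π (η n) ω ≠ ⊤ => hc htop)] at h
      exact ⟨htop, h ▸ hmem'⟩
    · rw [if_pos (htop : π (η n) ω ≠ ⊤)] at h
      exact absurd (h ▸ hmem') htop
  have hSsub : ∀ n, ∀ᵐ ω ∂μ, ω ∈ S n → π (ξs n) ω = ⊤ := by
    intro n
    cases n with
    | zero => exact Filter.Eventually.of_forall fun ω h => by rw [← hη0]; exact h
    | succ k => filter_upwards [hS k] with ω h hmem using (h hmem).2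
  have hμS : ∀ n, μ (Uᶜ ∩ S n) < c + δ n := by
    intro n
    refine lt_of_le_of_lt (measure_mono_ae ?_) (hξs n)
    filter_upwards [hSsub n] with ω h hw
    exact ⟨hw.1, h hw.2⟩
  set Sinf : Set Ω := ⋂ n, S n with hSinf
  have hall : ∀ ξ : Ω →ₘ[μ] ℝ, ∀ᵐ ω ∂μ, ω ∈ Sinf ∩ Uᶜ → π ξ ω = ⊤ := by
    intro ξ
    set E := Sinf ∩ Uᶜ ∩ {ω | π ξ ω ≠ ⊤} with hE
    rcases eq_or_ne (μ E) 0 with h0 | hne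
    · rw [ae_iff]
      refine measure_mono_null ?_ h0
      intro ω hω
      simp only [Set.mem_setOf_eq, Classical.not_imp] at hω
      exact ⟨⟨hω.1.1, hω.1.2⟩, hω.2⟩
    · exfalso
      obtain ⟨n, hn⟩ := ENNReal.exists_inv_nat_lt hne
      have hδE : δ n < μ E := lt_of_le_of_lt
        (by
          apply ENNReal.inv_le_inv.mpr
          exact_mod_cast le_of_lt (Nat.lt_succ_self n)) hn
      set ζ := paste μ ξ (η n) {ω | π ξ ω ≠ ⊤} (mSet ξ) with hζdef
      have hζ := reg_paste μ π hreg ξ (η n) {ω | π ξ ω ≠ ⊤} (mSet ξ)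
      rw [← hζdef] at hζ
      have h1 : μ (Uᶜ ∩ {ω | π ζ ω = ⊤}) ≤ μ ((Uᶜ ∩ S n) ∩ {ω | π ξ ω = ⊤}) := by
        refine measure_mono_ae ?_
        filter_upwards [hζ] with ω h hw
        by_cases hξtop : π ξ ω = ⊤
        · rw [if_neg (fun hc : π ξ ω ≠ ⊤ => hc hξtop)] at h
          have hw2 : π ζ ω = ⊤ := hw.2
          rw [h] at hw2
          exact ⟨⟨hw.1, hw2⟩, hξtop⟩
        · rw [if_pos (hξtop : π ξ ω ≠ ⊤)] at h
          have hw2 : π ζ ω = ⊤ := hw.2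
          rw [h] at hw2
          exact absurd hw2 hξtop
      have h2 : c ≤ μ (Uᶜ ∩ {ω | π ζ ω = ⊤}) := iInf_le _ ζ
      have hEsub : E ⊆ (Uᶜ ∩ S n) ∩ {ω | π ξ ω ≠ ⊤} := by
        intro ω hω
        exact ⟨⟨hω.1.2, Set.mem_iInter.mp hω.1.1 n⟩, hω.2⟩
      have h3 : μ ((Uᶜ ∩ S n) ∩ {ω | π ξ ω = ⊤}) + μ E ≤ μ (Uᶜ ∩ S n) := by
        have hdisj : Disjoint ((Uᶜ ∩ S n) ∩ {ω | π ξ ω = ⊤}) ((Uᶜ ∩ S n) ∩ {ω | π ξ ω ≠ ⊤}) := by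
          apply Set.disjoint_left.mpr
          rintro ω ⟨_, h1⟩ ⟨_, h2⟩
          exact h2 h1
        have hunion : ((Uᶜ ∩ S n) ∩ {ω | π ξ ω = ⊤}) ∪ ((Uᶜ ∩ S n) ∩ {ω | π ξ ω ≠ ⊤}) = Uᶜ ∩ S n := by
          ext ω
          by_cases hξω : π ξ ω = ⊤ <;> simp [hξω]
        calc μ ((Uᶜ ∩ S n) ∩ {ω | π ξ ω = ⊤}) + μ E
            ≤ μ ((Uᶜ ∩ S n) ∩ {ω | π ξ ω = ⊤}) + μ ((Uᶜ ∩ S n) ∩ {ω | π ξ ω ≠ ⊤}) :=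
              add_le_add le_rfl (measure_mono hEsub)
          _ = μ (Uᶜ ∩ S n) := by
              rw [← measure_union hdisj ((hU.1.compl.inter (mSet' (η n))).inter (mSet ξ)), hunion]
      have : c + μ E < c + μ E :=
        calc c + μ E ≤ μ ((Uᶜ ∩ S n) ∩ {ω | π ξ ω = ⊤}) + μ E := add_le_add (le_trans h2 h1) le_rfl
          _ ≤ μ (Uᶜ ∩ S n) := h3
          _ < c + δ n := hμS n
          _ ≤ c + μ E := add_le_add le_rfl hδE.le
      exact lt_irrefl _ this
  have hnul : μ (Sinf ∩ Uᶜ) = 0 := by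
    have := hU.2.2 (Sinf ∩ Uᶜ) ((MeasurableSet.iInter fun n => mSet' (η n)).inter hU.1.compl) hall
    rwa [show (Sinf ∩ Uᶜ) \ U = Sinf ∩ Uᶜ by ext ω; simp [Set.mem_diff]] at this
  set P : ℕ → Ω → Prop := fun n ω => π (η n) ω ≠ ⊤ ∨ ω ∈ Sinf with hP
  have htot : ∀ ω, ∃ n, P n ω := by
    intro ω
    by_cases hω : ω ∈ Sinf
    · exact ⟨0, Or.inr hω⟩
    · rw [hSinf, Set.mem_iInter] at hω
      push_neg at hω
      obtain ⟨n, hn⟩ := hω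
      exact ⟨n, Or.inl hn⟩
  have mP : ∀ n, MeasurableSet {ω | P n ω} := by
    intro n
    have : {ω | P n ω} = {ω | π (η n) ω ≠ ⊤} ∪ Sinf := by ext ω; simp [hP]
    rw [this]
    exact (mSet (η n)).union (MeasurableSet.iInter fun k => mSet' (η k))
  set g : ℕ → Ω → ℝ := fun n => (η n).aemeasurable.mk _ with hg
  have hgmeas : ∀ n, Measurable (g n) := fun n => (η n).aemeasurable.measurable_mk
  set f : Ω → ℝ := fun ω => g (Nat.find (htot ω)) ω with hf
  have hfmeas : Measurable f := Measurable.find hgmeas mP htot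
  set ξ₀ := AEEqFun.mk f hfmeas.aestronglyMeasurable with hξ₀
  have mD : ∀ n, MeasurableSet {ω | Nat.find (htot ω) = n} := by
    intro n
    have : {ω | Nat.find (htot ω) = n} = {ω | P n ω} ∩ ⋂ k, ⋂ _ : k < n, {ω | P k ω}ᶜ := by
      ext ω
      simp only [Set.mem_setOf_eq, Set.mem_inter_iff, Set.mem_iInter, Set.mem_compl_iff,
        Nat.find_eq_iff]
    rw [this]
    exact (mP n).inter (MeasurableSet.iInter fun k => MeasurableSet.iInter fun _ => (mP k).compl)
  have hDn : ∀ n, ∀ᵐ ω ∂μ, Nat.find (htot ω) = n → π ξ₀ ω = π (η n) ω := by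
    intro n
    refine (hreg (η n) ξ₀ {ω | Nat.find (htot ω) = n} (mD n) ξ₀ ?_).mono ?_
    · have hcoe : ∀ᵐ ω ∂μ, ξ₀ ω = f ω := AEEqFun.coeFn_mk _ _
      filter_upwards [hcoe, (η n).aemeasurable.ae_eq_mk] with ω h1 h2
      by_cases hω : Nat.find (htot ω) = n
      · rw [if_pos (hω : ω ∈ {ω | Nat.find (htot ω) = n}), h1, hf]
        simp only
        rw [hω]
        exact h2.symm
      · rw [if_neg (hω : ω ∉ {ω | Nat.find (htot ω) = n})]
    · intro ω h hn
      simp only [Set.mem_setOf_eq] at h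
      rw [if_pos hn] at h
      exact h
  refine ⟨ξ₀, ?_⟩
  have hnmem : ∀ᵐ ω ∂μ, ω ∉ Sinf ∩ Uᶜ := by
    rw [← compl_mem_ae_iff] at hnul
    exact hnul
  filter_upwards [ae_all_iff.mpr hDn, hnmem] with ω hω hω2 hUc
  have hωS : ω ∉ Sinf := fun h => hω2 ⟨h, hUc⟩
  have hfind : P (Nat.find (htot ω)) ω := Nat.find_spec (htot ω)
  have heq := hω (Nat.find (htot ω)) rfl
  rw [heq]
  rcases hfind with h | h
  · exact h
  · exact absurd h hωS

/-- **Quasiconvexity via level sets (Remark on (QCO)).**  Let `π : L⁰ → L̄⁰` be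
regular (REG) and let `U = Υ_π` (so `Uᶜ = T_π`).  Then (a) the quasiconvexity
inequality `π(Λx₁ + (1−Λ)x₂) ≤ π(x₁) ∨ π(x₂)` a.s. holds for all `x₁, x₂, Λ`
with `0 ≤ Λ ≤ 1` a.s. iff all lower level sets `U_Y`, `Y ∈ L⁰`, are `L⁰`-convex;
(b) if the inequality holds then `{ξ ∣ π ξ < Y a.e. on D}` is `L⁰`-convex for
every `Y ∈ L̄⁰` and `D ∈ 𝒢`. -/
theorem stmt18 (μ : Measure Ω) [IsProbabilityMeasure μ]
    (π : (Ω →ₘ[μ] ℝ) → Ω → EReal)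
    (hmeas : ∀ ξ : Ω →ₘ[μ] ℝ, Measurable (π ξ))
    (hnbot : ∀ ξ : Ω →ₘ[μ] ℝ, ∀ᵐ ω ∂μ, π ξ ω ≠ ⊥)
    (hreg : Reg μ π)
    (U : Set Ω) (hU : IsMaxInfty μ π U) :
    ((∀ x₁ x₂ lam : Ω →ₘ[μ] ℝ, (∀ᵐ ω ∂μ, 0 ≤ lam ω ∧ lam ω ≤ 1) →
        ∀ᵐ ω ∂μ, π (lam * x₁ + (1 - lam) * x₂) ω ≤ max (π x₁ ω) (π x₂ ω)) ↔
      (∀ Y : Ω →ₘ[μ] ℝ, L0Convex μ (levelSet μ π Uᶜ Y))) ∧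
      ((∀ x₁ x₂ lam : Ω →ₘ[μ] ℝ, (∀ᵐ ω ∂μ, 0 ≤ lam ω ∧ lam ω ≤ 1) →
        ∀ᵐ ω ∂μ, π (lam * x₁ + (1 - lam) * x₂) ω ≤ max (π x₁ ω) (π x₂ ω)) →
        ∀ Y : Ω → EReal, Measurable Y → ∀ D : Set Ω, MeasurableSet D →
          L0Convex μ {ξ : Ω →ₘ[μ] ℝ | ∀ᵐ ω ∂μ, ω ∈ D → π ξ ω < Y ω}) := by
  have mSet : ∀ x : Ω →ₘ[μ] ℝ, MeasurableSet {ω | π x ω ≠ ⊤} :=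
    fun x => ((hmeas x) (measurableSet_singleton ⊤)).compl
  have part_b : (∀ x₁ x₂ lam : Ω →ₘ[μ] ℝ, (∀ᵐ ω ∂μ, 0 ≤ lam ω ∧ lam ω ≤ 1) →
      ∀ᵐ ω ∂μ, π (lam * x₁ + (1 - lam) * x₂) ω ≤ max (π x₁ ω) (π x₂ ω)) →
      ∀ Y : Ω → EReal, Measurable Y → ∀ D : Set Ω, MeasurableSet D →
        L0Convex μ {ξ : Ω →ₘ[μ] ℝ | ∀ᵐ ω ∂μ, ω ∈ D → π ξ ω < Y ω} := by
    intro hQ Y _ D _ x hx y hy lam hlam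
    simp only [Set.mem_setOf_eq] at hx hy ⊢
    filter_upwards [hQ x y lam hlam, hx, hy] with ω h1 h2 h3 hD
    exact lt_of_le_of_lt h1 (max_lt (h2 hD) (h3 hD))
  refine ⟨⟨?_, ?_⟩, part_b⟩
  · -- forward: QCO → level sets convex
    intro hQ Y x hx y hy lam hlam
    simp only [levelSet, Set.mem_setOf_eq] at hx hy ⊢
    filter_upwards [hQ x y lam hlam, hx, hy] with ω h1 h2 h3
    by_cases hω : ω ∈ Uᶜ
    · rw [if_pos hω]
      rw [if_pos hω] at h2 h3
      exact le_trans h1 (max_le h2 h3)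
    · rw [if_neg hω]
      rw [if_neg hω] at h2
      exact h2
  · -- backward: level sets convex → QCO
    intro hLS x₁ x₂ lam hlam
    obtain ⟨ξ₀, hξ₀⟩ := exists_xi0 μ π hmeas hreg U hU
    set B := {ω | π x₁ ω ≠ ⊤ ∧ π x₂ ω ≠ ⊤} with hBdef
    have mB : MeasurableSet B := (mSet x₁).inter (mSet x₂)
    set Yf : Ω → ℝ := fun ω => if ω ∈ B ∩ Uᶜ then max (π x₁ ω).toReal (π x₂ ω).toReal
        else max (π ξ₀ ω).toReal 0 with hYf
    have hYmeas : Measurable Yf := Measurable.ite (mB.inter hU.1.compl)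
      ((measurable_ereal_toReal.comp (hmeas x₁)).max (measurable_ereal_toReal.comp (hmeas x₂)))
      ((measurable_ereal_toReal.comp (hmeas ξ₀)).max measurable_const)
    set Y := AEEqFun.mk Yf hYmeas.aestronglyMeasurable with hYdef
    have hYcoe : ∀ᵐ ω ∂μ, Y ω = Yf ω := AEEqFun.coeFn_mk _ _
    set xt1 := paste μ x₁ ξ₀ B mB with hxt1
    set xt2 := paste μ x₂ ξ₀ B mB with hxt2
    have hpt1 := reg_paste μ π hreg x₁ ξ₀ B mB
    have hpt2 := reg_paste μ π hreg x₂ ξ₀ B mB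
    rw [← hxt1] at hpt1
    rw [← hxt2] at hpt2
    have hmem1 : xt1 ∈ levelSet μ π Uᶜ Y := by
      filter_upwards [hpt1, hYcoe, hξ₀, hnbot x₁, hnbot ξ₀] with ω h1 hY h0 hb1 hb0
      rw [hY]
      by_cases hT : ω ∈ Uᶜ
      · rw [if_pos hT]
        by_cases hBω : ω ∈ B
        · rw [if_pos hBω] at h1
          rw [h1]
          simp only [hYf]
          rw [if_pos (Set.mem_inter hBω hT)]
          calc π x₁ ω = ((π x₁ ω).toReal : EReal) := (EReal.coe_toReal hBω.1 hb1).symm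
            _ ≤ _ := by exact_mod_cast le_max_left _ _
        · rw [if_neg hBω] at h1
          rw [h1]
          simp only [hYf]
          rw [if_neg (fun hc : ω ∈ B ∩ Uᶜ => hBω hc.1)]
          calc π ξ₀ ω = ((π ξ₀ ω).toReal : EReal) := (EReal.coe_toReal (h0 hT) hb0).symm
            _ ≤ _ := by exact_mod_cast le_max_left _ _
      · rw [if_neg hT]
        simp only [hYf]
        rw [if_neg (fun hc : ω ∈ B ∩ Uᶜ => hT hc.2)]
        exact_mod_cast le_max_right (π ξ₀ ω).toReal 0
    have hmem2 : xt2 ∈ levelSet μ π Uᶜ Y := by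
      filter_upwards [hpt2, hYcoe, hξ₀, hnbot x₂, hnbot ξ₀] with ω h1 hY h0 hb2 hb0
      rw [hY]
      by_cases hT : ω ∈ Uᶜ
      · rw [if_pos hT]
        by_cases hBω : ω ∈ B
        · rw [if_pos hBω] at h1
          rw [h1]
          simp only [hYf]
          rw [if_pos (Set.mem_inter hBω hT)]
          calc π x₂ ω = ((π x₂ ω).toReal : EReal) := (EReal.coe_toReal hBω.2 hb2).symm
            _ ≤ _ := by exact_mod_cast le_max_right _ _
        · rw [if_neg hBω] at h1
          rw [h1]
          simp only [hYf]
          rw [if_neg (fun hc : ω ∈ B ∩ Uᶜ => hBω hc.1)]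
          calc π ξ₀ ω = ((π ξ₀ ω).toReal : EReal) := (EReal.coe_toReal (h0 hT) hb0).symm
            _ ≤ _ := by exact_mod_cast le_max_left _ _
      · rw [if_neg hT]
        simp only [hYf]
        rw [if_neg (fun hc : ω ∈ B ∩ Uᶜ => hT hc.2)]
        exact_mod_cast le_max_right (π ξ₀ ω).toReal 0
    have hconv := hLS Y xt1 hmem1 xt2 hmem2 lam hlam
    set combo := lam * x₁ + (1 - lam) * x₂ with hcombodef
    have hcombo := hreg combo ξ₀ B mB (lam * xt1 + (1 - lam) * xt2) (by
      filter_upwards [AEEqFun.coeFn_add (lam * xt1) ((1 - lam) * xt2),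
        AEEqFun.coeFn_mul lam xt1, AEEqFun.coeFn_mul (1 - lam) xt2,
        AEEqFun.coeFn_sub (1 : Ω →ₘ[μ] ℝ) lam, AEEqFun.coeFn_one (β := ℝ) (μ := μ),
        AEEqFun.coeFn_add (lam * x₁) ((1 - lam) * x₂),
        AEEqFun.coeFn_mul lam x₁, AEEqFun.coeFn_mul (1 - lam) x₂,
        coeFn_paste μ x₁ ξ₀ B mB, coeFn_paste μ x₂ ξ₀ B mB]
        with ω ha hm1 hm2 hs ho ha2 hm12 hm22 hp1 hp2
      rw [← hxt1] at hp1
      rw [← hxt2] at hp2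
      rw [ha, Pi.add_apply, hm1, hm2, Pi.mul_apply, Pi.mul_apply, hs, Pi.sub_apply, ho,
        Pi.one_apply, hp1, hp2]
      by_cases hBω : ω ∈ B
      · rw [if_pos hBω, if_pos hBω, if_pos hBω, ha2, Pi.add_apply, hm12, hm22, Pi.mul_apply,
          Pi.mul_apply, hs, Pi.sub_apply, ho, Pi.one_apply]
      · rw [if_neg hBω, if_neg hBω, if_neg hBω]
        ring)
    have hUmem := hU.2.1 x₁
    filter_upwards [hconv, hcombo, hYcoe, hUmem, hnbot x₁, hnbot x₂] with ω hc hcb hY htopU hb1 hb2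
    by_cases hUω : ω ∈ Uᶜ
    · by_cases hBω : ω ∈ B
      · rw [if_pos hBω] at hcb
        rw [if_pos hUω, hcb, hY] at hc
        simp only [hYf] at hc
        rw [if_pos (Set.mem_inter hBω hUω)] at hc
        calc π combo ω ≤ ((max (π x₁ ω).toReal (π x₂ ω).toReal : ℝ) : EReal) := hc
          _ = max ((π x₁ ω).toReal : EReal) ((π x₂ ω).toReal : EReal) :=
              EReal.coe_strictMono.monotone.map_max
          _ = max (π x₁ ω) (π x₂ ω) := by
              rw [EReal.coe_toReal hBω.1 hb1, EReal.coe_toReal hBω.2 hb2]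
      · have htop : π x₁ ω = ⊤ ∨ π x₂ ω = ⊤ := by
          by_contra hcon
          push_neg at hcon
          exact hBω ⟨hcon.1, hcon.2⟩
        rcases htop with h | h
        · rw [h]
          simp
        · rw [h]
          simp
    · have hUω2 : ω ∈ U := Set.not_notMem.mp hUω
      rw [htopU hUω2]
      simp
end
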